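/- Define $F_s, G_s \in \underline{\mathbb{R}}^{n\times p}$ from max-plus features and the empirical Bellman operator, and $H_s \in \underline{\mathbb{R}}^{n\times q}$ from test functions by $[H_s]_{i,k} = [h]_k(z_i)$. Set $F_s^H = H_s^\top \boxtimes F_s$ and $G_s^H = H_s^\top \boxtimes G_s$. If $\bar\theta \in \mathbb{R}^p$ solves $F_s^H \boxtimes \theta = G_s^H \boxtimes (\gamma\theta)$, then $Q_{\bar\theta}(z) = \max_j([f]_j(z) + [\bar\theta]_j)$ satisfies the empirical variational Bellman equation: $\max_{i \in [1:n]}\{[h]_k(z_i) + Q_{\bar\theta}(z_i)\} = \max_{i \in [1:n]}\{[h]_k(z_i) + \mathbf{B}_s Q_{\bar\theta}(z_i)\}$ for every $k \in [1:q]$. -/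

import Mathlib

open Finset

lemma wb_add_sup {ι : Type*} (s : Finset ι) (g : ι → WithBot ℝ) (a : WithBot ℝ) :
    a + s.sup g = s.sup fun i => a + g i := by
  apply Finset.comp_sup_eq_sup_comp (g := (a + ·))
  · intro x y
    have hm : Monotone (a + ·) := fun u v huv => add_le_add_right huv a
    exact hm.map_sup x y
  · simp

lemma wb_sup_add {ι : Type*} (s : Finset ι) (g : ι → WithBot ℝ) (a : WithBot ℝ) :
    s.sup g + a = s.sup fun i => g i + a := by
  apply Finset.comp_sup_eq_sup_comp (g := (· + a))
  · intro x y
    have hm : Monotone (· + a) := fun u v huv => add_le_add_left huv a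
    exact hm.map_sup x y
  · simp

lemma wb_map_sup {ι : Type*} (s : Finset ι) (g : ι → WithBot ℝ) {γ : ℝ} (hγ : 0 ≤ γ) :
    (s.sup g).map (γ * ·) = s.sup fun i => (g i).map (γ * ·) := by
  apply Finset.comp_sup_eq_sup_comp
  · intro x y
    have hm : Monotone fun t : ℝ => γ * t := fun a b hab => mul_le_mul_of_nonneg_left hab hγ
    have hmono : Monotone (WithBot.map fun t : ℝ => γ * t) := by
      intro a b hab
      induction a using WithBot.recBotCoe with
      | bot => simp
      | coe a =>
        induction b using WithBot.recBotCoe with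
        | bot => simp at hab
        | coe b =>
          rw [WithBot.map_coe, WithBot.map_coe, WithBot.coe_le_coe]
          exact hm (WithBot.coe_le_coe.mp hab)
    exact hmono.map_sup x y
  · simp

lemma wb_map_add_coe (x : WithBot ℝ) (c γ : ℝ) :
    (x + (c : WithBot ℝ)).map (γ * ·) = x.map (γ * ·) + ((γ * c : ℝ) : WithBot ℝ) := by
  induction x using WithBot.recBotCoe with
  | bot => simp
  | coe a =>
    have h1 : ((a : WithBot ℝ) + c) = ((a + c : ℝ) : WithBot ℝ) := by norm_cast
    rw [h1, WithBot.map_coe, WithBot.map_coe]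
    rw [show γ * (a + c) = γ * a + γ * c from mul_add γ a c]
    norm_cast

def mpMulVec {m n : ℕ} (A : Fin m → Fin n → WithBot ℝ) (v : Fin n → WithBot ℝ) :
    Fin m → WithBot ℝ :=
  fun i => univ.sup fun j => A i j + v j

def mpMul {m n p : ℕ} (A : Fin m → Fin n → WithBot ℝ) (B : Fin n → Fin p → WithBot ℝ) :
    Fin m → Fin p → WithBot ℝ :=
  fun i k => univ.sup fun j => A i j + B j k

def empBellman {X U : Type*} [Fintype U] {N : ℕ} (r : Fin N → ℝ) (γ : ℝ)
    (xp : Fin N → X) (g : X × U → WithBot ℝ) : Fin N → WithBot ℝ :=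
  fun i => (r i : WithBot ℝ) + (univ.sup fun u => g (xp i, u)).map (γ * ·)

/-- if `θ̄` solves `Fₛᴴ ⊠ θ = Gₛᴴ ⊠ (γθ)` with `Fₛᴴ = Hₛᵀ ⊠ Fₛ` and
`Gₛᴴ = Hₛᵀ ⊠ Gₛ`, then `Q_θ̄` solves the empirical variational Bellman equation. -/
theorem mp_empirical_variational_bellman {X U : Type*} [Fintype U] [Nonempty U]
    {n p q : ℕ} (γ : ℝ) (hγ : 0 < γ ∧ γ < 1)
    (z : Fin n → X × U) (xp : Fin n → X) (r : Fin n → ℝ)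
    (f : Fin p → X × U → WithBot ℝ) (h : Fin q → X × U → WithBot ℝ)
    (Fs Gs : Fin n → Fin p → WithBot ℝ) (Hs : Fin n → Fin q → WithBot ℝ)
    (hFs : ∀ i j, Fs i j = f j (z i))
    (hGs : ∀ i j, Gs i j = empBellman r γ xp (f j) i)
    (hHs : ∀ i k, Hs i k = h k (z i))
    (θbar : Fin p → ℝ)
    (hθ : mpMulVec (mpMul (fun k i => Hs i k) Fs) (fun j => ((θbar j : ℝ) : WithBot ℝ)) =
          mpMulVec (mpMul (fun k i => Hs i k) Gs) (fun j => ((γ * θbar j : ℝ) : WithBot ℝ))) :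
    ∀ k, (univ.sup fun i => h k (z i) +
            (univ.sup fun j => f j (z i) + (θbar j : WithBot ℝ))) =
         (univ.sup fun i => h k (z i) +
            empBellman r γ xp (fun w => univ.sup fun j => f j w + (θbar j : WithBot ℝ)) i) := by
  intro k
  have key := congrFun hθ k
  simp only [mpMulVec, mpMul] at key
  have hQ : ∀ i : Fin n,
      empBellman r γ xp (fun w => univ.sup fun j => f j w + (θbar j : WithBot ℝ)) i
      = univ.sup fun j => Gs i j + ((γ * θbar j : ℝ) : WithBot ℝ) := by
    intro i
    unfold empBellman
    have h1 : (univ.sup fun u : U => univ.sup fun j => f j (xp i, u) + (θbar j : WithBot ℝ))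
        = univ.sup fun j => (univ.sup fun u : U => f j (xp i, u)) + (θbar j : WithBot ℝ) := by
      rw [Finset.sup_comm]
      exact Finset.sup_congr rfl fun j _ => (wb_sup_add _ _ _).symm
    rw [h1, wb_map_sup _ _ hγ.1.le, wb_add_sup]
    refine Finset.sup_congr rfl fun j _ => ?_
    rw [hGs i j, wb_map_add_coe]
    unfold empBellman
    exact (add_assoc _ _ _).symm
  calc (univ.sup fun i => h k (z i) + univ.sup fun j => f j (z i) + (θbar j : WithBot ℝ))
      = univ.sup fun i => univ.sup fun j => Hs i k + (Fs i j + ((θbar j : ℝ) : WithBot ℝ)) := by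
        refine Finset.sup_congr rfl fun i _ => ?_
        rw [← hHs i k,
          show (fun j => f j (z i) + ((θbar j : ℝ) : WithBot ℝ))
            = fun j => Fs i j + ((θbar j : ℝ) : WithBot ℝ) from
            funext fun j => by rw [hFs i j], wb_add_sup]
    _ = univ.sup fun j => (univ.sup fun i => Hs i k + Fs i j) + ((θbar j : ℝ) : WithBot ℝ) := by
        rw [Finset.sup_comm]
        refine Finset.sup_congr rfl fun j _ => ?_
        rw [wb_sup_add]
        exact Finset.sup_congr rfl fun i _ => (add_assoc _ _ _).symm
    _ = univ.sup fun j => (univ.sup fun i => Hs i k + Gs i j) + ((γ * θbar j : ℝ) : WithBot ℝ) :=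
        key
    _ = univ.sup fun i => univ.sup fun j => Hs i k + (Gs i j + ((γ * θbar j : ℝ) : WithBot ℝ)) := by
        rw [Finset.sup_comm]
        refine Finset.sup_congr rfl fun j _ => ?_
        rw [wb_sup_add]
        exact Finset.sup_congr rfl fun i _ => add_assoc _ _ _
    _ = univ.sup fun i => h k (z i) +
          empBellman r γ xp (fun w => univ.sup fun j => f j w + (θbar j : WithBot ℝ)) i := by
        refine Finset.sup_congr rfl fun i _ => ?_
        rw [hQ i, ← hHs i k, wb_add_sup]
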